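/- Let G be a graph of order n with a dominating induced matching, and let ρ be the spectral radius of its adjacency matrix. Then (n/2)² ≥ ρ(ρ−1), with equality if and only if n = 4m and G is the join of mK₂ with the empty graph on n−2m vertices (i.e., G has a complete dominating induced matching of size m = n/4). -/

import Mathlib

open Matrix Finset
open scoped Classical

def edgesShare {V : Type*} (e f : Sym2 V) : Prop := ∃ v, v ∈ e ∧ v ∈ f

def matchedVert {V : Type*} (M : Finset (Sym2 V)) (v : V) : Prop := ∃ e ∈ M, v ∈ e

/-- `M` is a set of edges of `G`, pairwise not sharing end-vertices. -/
def IsMatchingSet {V : Type*} (G : SimpleGraph V) (M : Finset (Sym2 V)) : Prop :=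
  (∀ e ∈ M, e ∈ G.edgeSet) ∧ ∀ e ∈ M, ∀ f ∈ M, e ≠ f → ¬ edgesShare e f

/-- Dominating induced matching: every edge of `G` is in `M` or shares an
end-vertex with exactly one edge of `M`. -/
def IsDIM {V : Type*} (G : SimpleGraph V) (M : Finset (Sym2 V)) : Prop :=
  IsMatchingSet G M ∧ ∀ e ∈ G.edgeSet, e ∉ M → ∃! f, f ∈ M ∧ edgesShare e f

/-- Induced matching: the subgraph induced by the matched vertices consists
exactly of the edges of `M`. -/
def IsInducedMatching {V : Type*} (G : SimpleGraph V) (M : Finset (Sym2 V)) : Prop :=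
  IsMatchingSet G M ∧ ∀ e ∈ G.edgeSet, (∀ v ∈ e, matchedVert M v) → e ∈ M

/-- Complete dominating induced matching: a DIM such that the set of unmatched
vertices is nonempty and every matched vertex is adjacent to every unmatched vertex,
i.e. `E(G) = M ∪ {xy : x ∈ V(M), y ∉ V(M)}`. -/
def IsCompleteDIM {V : Type*} (G : SimpleGraph V) (M : Finset (Sym2 V)) : Prop :=
  IsDIM G M ∧ (∃ v, ¬ matchedVert M v) ∧
    ∀ x y : V, matchedVert M x → ¬ matchedVert M y → G.Adj x y


section Struct
variable {V : Type*} {G : SimpleGraph V} {M : Finset (Sym2 V)} {v u : V}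

lemma unique_cover (hM : IsMatchingSet G M) {v : V} {e f : Sym2 V}
    (he : e ∈ M) (hf : f ∈ M) (hve : v ∈ e) (hvf : v ∈ f) : e = f := by
  by_contra hne
  exact hM.2 e he f hf hne ⟨v, hve, hvf⟩

lemma adj_matched_mem (hM : IsDIM G M) {x y : V} (hadj : G.Adj x y)
    (hx : matchedVert M x) (hy : matchedVert M y) : s(x, y) ∈ M := by
  by_contra hnot
  obtain ⟨e, he, hxe⟩ := hx
  obtain ⟨f, hf, hyf⟩ := hy
  obtain ⟨g, ⟨hgM, hgs⟩, huniq⟩ := hM.2 s(x,y) (G.mem_edgeSet.mpr hadj) hnot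
  have hef : e = f := by
    have h1 : e = g := huniq e ⟨he, ⟨x, Sym2.mem_mk_left x y, hxe⟩⟩
    have h2 : f = g := huniq f ⟨hf, ⟨y, Sym2.mem_mk_right x y, hyf⟩⟩
    rw [h1, h2]
  rw [hef] at hxe
  have : s(x,y) = f := by
    have hxy : x ≠ y := hadj.ne
    obtain ⟨a, b⟩ := f
    rw [Sym2.mem_iff] at hxe hyf
    rcases hxe with rfl | rfl <;> rcases hyf with rfl | rfl
    · exact absurd rfl hxy
    · rfl
    · exact Sym2.eq_swap
    · exact absurd rfl hxy
  exact hnot (this ▸ hf)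

lemma no_unmatched_adj (hM : IsDIM G M) {z w : V} (hadj : G.Adj z w)
    (hz : ¬ matchedVert M z) (hw : ¬ matchedVert M w) : False := by
  have hnot : s(z,w) ∉ M := fun h => hz ⟨s(z,w), h, Sym2.mem_mk_left _ _⟩
  obtain ⟨g, ⟨hgM, v, hv1, hv2⟩, -⟩ := hM.2 s(z,w) (G.mem_edgeSet.mpr hadj) hnot
  rw [Sym2.mem_iff] at hv1
  rcases hv1 with rfl | rfl
  · exact hz ⟨g, hgM, hv2⟩
  · exact hw ⟨g, hgM, hv2⟩

noncomputable def partnerFn (M : Finset (Sym2 V)) (v : V) : V :=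
  if h : matchedVert M v then Sym2.Mem.other h.choose_spec.2 else v

lemma partner_edge_mem (h : matchedVert M v) : s(v, partnerFn M v) ∈ M := by
  rw [partnerFn, dif_pos h]
  rw [Sym2.other_spec h.choose_spec.2]
  exact h.choose_spec.1

lemma partner_matched (h : matchedVert M v) : matchedVert M (partnerFn M v) :=
  ⟨s(v, partnerFn M v), partner_edge_mem h, Sym2.mem_mk_right _ _⟩

lemma partner_adj (hM : IsMatchingSet G M) (h : matchedVert M v) : G.Adj v (partnerFn M v) :=
  G.mem_edgeSet.mp (hM.1 _ (partner_edge_mem h))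

lemma eq_partner (hM : IsMatchingSet G M) (hvu : s(v, u) ∈ M) : u = partnerFn M v := by
  have hv : matchedVert M v := ⟨_, hvu, Sym2.mem_mk_left _ _⟩
  have := unique_cover hM hvu (partner_edge_mem hv) (Sym2.mem_mk_left _ _)
    (Sym2.mem_mk_left _ _)
  exact (Sym2.congr_right.mp this)

lemma partner_invol (hM : IsMatchingSet G M) (h : matchedVert M v) :
    partnerFn M (partnerFn M v) = v := by
  have := partner_edge_mem h
  rw [Sym2.eq_swap] at this
  exact (eq_partner hM this).symm

/-- the matched neighbors of a matched vertex: just the partner -/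
lemma nbr_matched_eq [Fintype V] [DecidableRel G.Adj] (hM : IsDIM G M) (h : matchedVert M v) :
    (G.neighborFinset v).filter (fun u => matchedVert M u) = {partnerFn M v} := by
  ext u
  simp only [Finset.mem_filter, SimpleGraph.mem_neighborFinset, Finset.mem_singleton]
  constructor
  · rintro ⟨hadj, hu⟩
    exact eq_partner hM.1 (adj_matched_mem hM hadj h hu)
  · rintro rfl
    exact ⟨partner_adj hM.1 h, partner_matched h⟩

/-- neighbors of an unmatched vertex are the adjacent matched vertices -/
lemma nbr_unmatched_eq [Fintype V] [DecidableRel G.Adj] (hM : IsDIM G M)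
    (h : ¬ matchedVert M v) :
    G.neighborFinset v = (univ.filter (fun u => matchedVert M u)).filter (fun u => G.Adj v u) := by
  ext u
  simp only [Finset.mem_filter, SimpleGraph.mem_neighborFinset, Finset.mem_univ, true_and]
  constructor
  · intro hadj
    refine ⟨?_, hadj⟩
    by_contra hu
    exact no_unmatched_adj hM hadj h hu
  · exact fun h => h.2

lemma card_matched [Fintype V] (hM : IsMatchingSet G M) :
    (univ.filter (fun v => matchedVert M v)).card = 2 * M.card := by
  have hset : univ.filter (fun v => matchedVert M v)
      = M.biUnion (fun e => univ.filter (· ∈ e)) := by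
    ext v
    simp only [Finset.mem_filter, Finset.mem_univ, true_and, Finset.mem_biUnion]
    exact Iff.rfl
  rw [hset, Finset.card_biUnion]
  · rw [Finset.sum_congr rfl (fun e he => ?_), Finset.sum_const, smul_eq_mul, mul_comm]
    have hd : ¬ e.IsDiag := G.not_isDiag_of_mem_edgeSet (hM.1 e he)
    obtain ⟨a, b⟩ := e
    have hab : a ≠ b := by simpa [Sym2.isDiag_iff_proj_eq] using hd
    have : univ.filter (· ∈ s(a,b)) = {a, b} := by
      ext v; simp [Sym2.mem_iff]
    rw [this, Finset.card_insert_of_notMem (by simpa using hab), Finset.card_singleton]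
  · intro e he f hf hne
    simp only [Function.onFun]
    rw [Finset.disjoint_filter]
    intro v _ hve hvf
    exact hM.2 e he f hf hne ⟨v, hve, hvf⟩

end Struct

section Spec
variable {N : ℕ}

lemma spec_eigvec {A : Matrix (Fin N) (Fin N) ℝ} {ρ : ℝ} (h : ρ ∈ spectrum ℝ A) :
    ∃ x : Fin N → ℝ, x ≠ 0 ∧ A *ᵥ x = ρ • x := by
  rw [spectrum.mem_iff] at h
  rw [Matrix.isUnit_iff_isUnit_det, isUnit_iff_ne_zero, not_not,
    ← Matrix.exists_mulVec_eq_zero_iff] at h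
  obtain ⟨v, hv0, hv⟩ := h
  refine ⟨v, hv0, ?_⟩
  have hvv : (algebraMap ℝ (Matrix (Fin N) (Fin N) ℝ) ρ - A) *ᵥ v = 0 := hv
  rw [Matrix.sub_mulVec] at hvv
  have h2 : (algebraMap ℝ (Matrix (Fin N) (Fin N) ℝ)) ρ *ᵥ v = ρ • v := by
    rw [Matrix.algebraMap_eq_diagonal]
    ext i
    simp [Matrix.mulVec_diagonal]
  rw [h2] at hvv
  exact (sub_eq_zero.mp hvv).symm

lemma psd_of_spec_le {A : Matrix (Fin N) (Fin N) ℝ} (hA : A.IsHermitian) {ρ : ℝ}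
    (h : ∀ μ ∈ spectrum ℝ A, μ ≤ ρ) :
    (algebraMap ℝ (Matrix (Fin N) (Fin N) ℝ) ρ - A).PosSemidef := by
  have hH : (algebraMap ℝ (Matrix (Fin N) (Fin N) ℝ) ρ - A).IsHermitian := by
    refine IsHermitian.sub ?_ hA
    rw [Matrix.algebraMap_eq_diagonal]
    exact Matrix.isHermitian_diagonal _
  refine hH.posSemidef_iff_eigenvalues_nonneg.mpr fun i => show (0:ℝ) ≤ hH.eigenvalues i from ?_
  have hmem := hH.eigenvalues_mem_spectrum_real (𝕜 := ℝ) i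
  set ν := hH.eigenvalues i
  have hsub : ρ - ν ∈ spectrum ℝ A := by
    have hss := spectrum.singleton_sub_eq (A := Matrix (Fin N) (Fin N) ℝ) A ρ
    rw [← hss] at hmem
    obtain ⟨r, hr, s, hs, hrs⟩ := hmem
    simp only [Set.mem_singleton_iff] at hr
    have hsv : s = ρ - ν := by
      simp only at hrs
      rw [hr] at hrs
      linarith
    rwa [← hsv]
  linarith [h _ hsub]

lemma nonneg_eigvec {A : Matrix (Fin N) (Fin N) ℝ} (hsym : A.IsHermitian)
    (hpos : ∀ i j, 0 ≤ A i j) {ρ : ℝ} (h1 : ρ ∈ spectrum ℝ A)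
    (h2 : ∀ μ ∈ spectrum ℝ A, μ ≤ ρ) :
    ∃ y : Fin N → ℝ, y ≠ 0 ∧ (∀ v, 0 ≤ y v) ∧ A *ᵥ y = ρ • y := by
  obtain ⟨x, hx0, hx⟩ := spec_eigvec h1
  set y : Fin N → ℝ := fun v => |x v| with hy
  have hynn : ∀ v, 0 ≤ y v := fun v => abs_nonneg _
  have hy0 : y ≠ 0 := by
    intro h
    apply hx0
    funext v
    have := congrFun h v
    simpa [hy, abs_eq_zero] using this
  refine ⟨y, hy0, hynn, ?_⟩
  have hP := psd_of_spec_le hsym h2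
  have hQ : y ⬝ᵥ ((algebraMap ℝ (Matrix (Fin N) (Fin N) ℝ) ρ - A) *ᵥ y) = 0 := by
    have hexp : ∀ z : Fin N → ℝ,
        z ⬝ᵥ ((algebraMap ℝ (Matrix (Fin N) (Fin N) ℝ) ρ - A) *ᵥ z)
          = ρ * (z ⬝ᵥ z) - z ⬝ᵥ (A *ᵥ z) := by
      intro z
      rw [Matrix.sub_mulVec, dotProduct_sub]
      congr 1
      rw [Matrix.algebraMap_eq_diagonal]
      simp [Matrix.mulVec_diagonal, dotProduct, Finset.mul_sum, mul_comm, mul_assoc, mul_left_comm]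
    have hyy : y ⬝ᵥ y = x ⬝ᵥ x := by
      simp [dotProduct, hy, abs_mul_abs_self, ← sq, sq_abs]
    have hxAx : x ⬝ᵥ (A *ᵥ x) = ρ * (x ⬝ᵥ x) := by
      rw [hx]; simp [dotProduct, Finset.mul_sum, mul_comm, mul_left_comm]
    have hcmp : x ⬝ᵥ (A *ᵥ x) ≤ y ⬝ᵥ (A *ᵥ y) := by
      simp only [dotProduct, Matrix.mulVec, dotProduct]
      refine Finset.sum_le_sum fun i _ => ?_
      rw [Finset.mul_sum, Finset.mul_sum]
      refine Finset.sum_le_sum fun j _ => ?_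
      have habs : x i * (A i j * x j) ≤ |x i| * (A i j * |x j|) := by
        calc x i * (A i j * x j) ≤ |x i * (A i j * x j)| := le_abs_self _
        _ = |x i| * (A i j * |x j|) := by
            rw [abs_mul, abs_mul, abs_of_nonneg (hpos i j)]
      simpa [mul_comm, mul_assoc, mul_left_comm] using habs
    have h0 : (0:ℝ) ≤ y ⬝ᵥ ((algebraMap ℝ (Matrix (Fin N) (Fin N) ℝ) ρ - A) *ᵥ y) := by
      have := hP.dotProduct_mulVec_nonneg y
      simpa using this
    have hle : y ⬝ᵥ ((algebraMap ℝ (Matrix (Fin N) (Fin N) ℝ) ρ - A) *ᵥ y) ≤ 0 := by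
      rw [hexp y, hyy]
      linarith [hcmp, hexp x, hxAx]
    linarith
  have hker := (hP.dotProduct_mulVec_zero_iff y).mp (by simpa using hQ)
  rw [Matrix.sub_mulVec] at hker
  have h2' : (algebraMap ℝ (Matrix (Fin N) (Fin N) ℝ)) ρ *ᵥ y = ρ • y := by
    rw [Matrix.algebraMap_eq_diagonal]
    ext i
    simp [Matrix.mulVec_diagonal]
  rw [h2'] at hker
  exact (sub_eq_zero.mp hker).symm

end Spec

section Core

lemma arith_key {ρ a b A B : ℝ} (h1 : (ρ-1)*a ≤ A*b) (h2 : ρ*b ≤ B*a)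
    (ha : 0 < a) (hb : 0 < b) (hρ : 1 < ρ) (hA : 0 ≤ A) : ρ*(ρ-1) ≤ A*B := by
  have hρb : 0 < ρ*b := mul_pos (by linarith) hb
  have e1 : ((ρ-1)*a)*(ρ*b) ≤ (A*b)*(ρ*b) := mul_le_mul_of_nonneg_right h1 hρb.le
  have e2 : (A*b)*(ρ*b) ≤ (A*b)*(B*a) :=
    mul_le_mul_of_nonneg_left h2 (mul_nonneg hA hb.le)
  have e3 : (ρ*(ρ-1))*(a*b) ≤ (A*B)*(a*b) := by
    calc (ρ*(ρ-1))*(a*b) = ((ρ-1)*a)*(ρ*b) := by ring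
      _ ≤ (A*b)*(B*a) := le_trans e1 e2
      _ = (A*B)*(a*b) := by ring
  exact le_of_mul_le_mul_right e3 (mul_pos ha hb)

lemma arith_eq {ρ a b A B : ℝ} (h1 : (ρ-1)*a ≤ A*b) (h2 : ρ*b ≤ B*a)
    (ha : 0 < a) (hb : 0 < b) (hρ : 1 < ρ) (hA : 0 < A)
    (hk : ρ*(ρ-1) = A*B) : ρ*b = B*a ∧ (ρ-1)*a = A*b := by
  have hρb : 0 < ρ*b := mul_pos (by linarith) hb
  have hAb : 0 < A*b := mul_pos hA hb
  have hkab : ρ*(ρ-1)*(a*b) = A*B*(a*b) := by rw [hk]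
  have e1 : ((ρ-1)*a)*(ρ*b) ≤ (A*b)*(ρ*b) := mul_le_mul_of_nonneg_right h1 hρb.le
  have heq2 : ρ*b = B*a := by
    refine le_antisymm h2 ?_
    have hQA : (A*b)*(B*a) ≤ (A*b)*(ρ*b) := by
      calc (A*b)*(B*a) = (A*B)*(a*b) := by ring
        _ = ρ*(ρ-1)*(a*b) := hkab.symm
        _ = ((ρ-1)*a)*(ρ*b) := by ring
        _ ≤ (A*b)*(ρ*b) := e1
    exact le_of_mul_le_mul_left hQA hAb
  refine ⟨heq2, ?_⟩
  refine le_antisymm h1 ?_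
  have hEE : ((ρ-1)*a)*(ρ*b) = (A*b)*(ρ*b) := by
    calc ((ρ-1)*a)*(ρ*b) = ρ*(ρ-1)*(a*b) := by ring
      _ = (A*B)*(a*b) := hkab
      _ = (A*b)*(B*a) := by ring
      _ = (A*b)*(ρ*b) := by rw [heq2]
  exact le_of_eq (mul_right_cancel₀ (ne_of_gt hρb) hEE).symm

variable {n m : ℕ} {G : SimpleGraph (Fin n)} [DecidableRel G.Adj] {M : Finset (Sym2 (Fin n))}

set_option maxHeartbeats 1000000 in
lemma core (hM : IsDIM G M) (hcard : M.card = m) {ρ : ℝ} {y : Fin n → ℝ}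
    (hy0 : y ≠ 0) (hynn : ∀ v, 0 ≤ y v) (hAy : G.adjMatrix ℝ *ᵥ y = ρ • y) :
    ρ * (ρ - 1) ≤ ((n : ℝ) / 2)^2 ∧
      (ρ * (ρ - 1) = ((n : ℝ) / 2)^2 → n = 4 * m ∧ IsCompleteDIM G M) := by
  classical
  set X : Finset (Fin n) := univ.filter (fun v => matchedVert M v) with hXdef
  set W : Finset (Fin n) := univ.filter (fun v => ¬ matchedVert M v) with hWdef
  have hXcard : X.card = 2 * m := by rw [hXdef, card_matched hM.1, hcard]
  have hsplit : X.card + W.card = n := by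
    rw [hXdef, hWdef]
    rw [Finset.card_filter_add_card_filter_not]
    exact Fintype.card_fin n
  set q : ℕ := W.card with hqdef
  -- eigen equation pointwise
  have heig : ∀ v, ∑ u ∈ G.neighborFinset v, y u = ρ * y v := by
    intro v
    have := congrFun hAy v
    rwa [SimpleGraph.adjMatrix_mulVec_apply, Pi.smul_apply, smul_eq_mul] at this
  -- some positive coordinate
  obtain ⟨v₀, hv₀⟩ : ∃ v, 0 < y v := by
    by_contra hc
    push_neg at hc
    exact hy0 (funext fun v => le_antisymm (hc v) (hynn v))
  have hn1 : 1 ≤ n := by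
    rcases Nat.eq_zero_or_pos n with h | h
    · subst h; exact v₀.elim0
    · exact h
  have hρ0 : 0 ≤ ρ := by
    have h1 : 0 ≤ ∑ u ∈ G.neighborFinset v₀, y u :=
      Finset.sum_nonneg fun u _ => hynn u
    rw [heig v₀] at h1
    by_contra hneg
    push_neg at hneg
    nlinarith
  obtain ⟨a, hadef⟩ : ∃ r : ℝ, r = ∑ x ∈ X, y x := ⟨_, rfl⟩
  obtain ⟨b, hbdef⟩ : ∃ r : ℝ, r = ∑ z ∈ W, y z := ⟨_, rfl⟩
  have ha0 : 0 ≤ a := hadef ▸ Finset.sum_nonneg fun x _ => hynn x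
  have hb0 : 0 ≤ b := hbdef ▸ Finset.sum_nonneg fun z _ => hynn z
  have hab : 0 < a + b := by
    have : a + b = ∑ v : Fin n, y v := by
      rw [hadef, hbdef, hXdef, hWdef, Finset.sum_filter_add_sum_filter_not]
    rw [this]
    exact Finset.sum_pos' (fun v _ => hynn v) ⟨v₀, Finset.mem_univ _, hv₀⟩
  -- degree counts
  set c : Fin n → ℕ := fun z => (X.filter (fun x => G.Adj x z)).card with hcdef
  set d : Fin n → ℕ := fun x => (W.filter (fun z => G.Adj z x)).card with hddef
  have hcle : ∀ z, c z ≤ 2 * m := fun z => hXcard ▸ Finset.card_filter_le _ _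
  have hdle : ∀ x, d x ≤ q := fun x => Finset.card_filter_le _ _
  -- sum A : ρ * a = a + ∑_{z ∈ W} c z * y z
  have hpartnersum : ∑ x ∈ X, y (partnerFn M x) = a := by
    rw [hadef]
    refine Finset.sum_nbij' (fun x => partnerFn M x) (fun x => partnerFn M x) ?_ ?_ ?_ ?_ ?_
    · intro x hx
      simp only [hXdef, Finset.mem_filter, Finset.mem_univ, true_and] at hx ⊢
      exact partner_matched hx
    · intro x hx
      simp only [hXdef, Finset.mem_filter, Finset.mem_univ, true_and] at hx ⊢
      exact partner_matched hx
    · intro x hx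
      simp only [hXdef, Finset.mem_filter, Finset.mem_univ, true_and] at hx
      exact partner_invol hM.1 hx
    · intro x hx
      simp only [hXdef, Finset.mem_filter, Finset.mem_univ, true_and] at hx
      exact partner_invol hM.1 hx
    · intro x hx
      rfl
  have hTsum : ρ * a = a + ∑ z ∈ W, (c z : ℝ) * y z := by
    have h1 : ρ * a = ∑ x ∈ X, ρ * y x := by rw [hadef, Finset.mul_sum]
    have h2 : ∀ x ∈ X, ρ * y x
        = y (partnerFn M x) + ∑ z ∈ W, (if G.Adj x z then y z else 0) := by
      intro x hx
      simp only [hXdef, Finset.mem_filter, Finset.mem_univ, true_and] at hx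
      rw [← heig x, ← Finset.sum_filter_add_sum_filter_not (G.neighborFinset x)
        (fun u => matchedVert M u), nbr_matched_eq hM hx, Finset.sum_singleton]
      congr 1
      have hset : (G.neighborFinset x).filter (fun u => ¬ matchedVert M u)
          = W.filter (fun z => G.Adj x z) := by
        ext z
        simp only [Finset.mem_filter, SimpleGraph.mem_neighborFinset, hWdef,
          Finset.mem_univ, true_and]
        tauto
      rw [hset, Finset.sum_filter]
    rw [h1, Finset.sum_congr rfl h2, Finset.sum_add_distrib, hpartnersum]
    congr 1
    rw [Finset.sum_comm]
    refine Finset.sum_congr rfl fun z hz => ?_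
    rw [← Finset.sum_filter, Finset.sum_const, nsmul_eq_mul]
  -- sum B
  have hBsum : ρ * b = ∑ x ∈ X, (d x : ℝ) * y x := by
    have h1 : ρ * b = ∑ z ∈ W, ρ * y z := by rw [hbdef, Finset.mul_sum]
    have h2 : ∀ z ∈ W, ρ * y z = ∑ x ∈ X, (if G.Adj z x then y x else 0) := by
      intro z hz
      simp only [hWdef, Finset.mem_filter, Finset.mem_univ, true_and] at hz
      rw [← heig z, nbr_unmatched_eq hM hz, ← hXdef, Finset.sum_filter]
    rw [h1, Finset.sum_congr rfl h2, Finset.sum_comm]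
    refine Finset.sum_congr rfl fun x hx => ?_
    rw [← Finset.sum_filter, Finset.sum_const, nsmul_eq_mul]
  -- the two inequalities
  have hineqA : ρ * a ≤ a + 2 * (m:ℝ) * b := by
    rw [hTsum]
    have h2 : ∑ z ∈ W, (c z : ℝ) * y z ≤ ∑ z ∈ W, 2 * (m:ℝ) * y z := by
      refine Finset.sum_le_sum fun z hz => mul_le_mul_of_nonneg_right ?_ (hynn z)
      have := hcle z
      push_cast
      exact_mod_cast this
    have h3 : ∑ z ∈ W, 2 * (m:ℝ) * y z = 2 * (m:ℝ) * b := by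
      rw [hbdef, Finset.mul_sum]
    linarith
  have hineqB : ρ * b ≤ (q:ℝ) * a := by
    rw [hBsum]
    have h2 : ∑ x ∈ X, (d x : ℝ) * y x ≤ ∑ x ∈ X, (q:ℝ) * y x := by
      refine Finset.sum_le_sum fun x hx => mul_le_mul_of_nonneg_right ?_ (hynn x)
      exact_mod_cast hdle x
    have h3 : ∑ x ∈ X, (q:ℝ) * y x = (q:ℝ) * a := by rw [hadef, Finset.mul_sum]
    linarith
  have hnsum : 2 * (m:ℝ) + (q:ℝ) = (n:ℝ) := by
    rw [hXcard] at hsplit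
    exact_mod_cast hsplit
  have h2mqle : 2 * (m:ℝ) * (q:ℝ) ≤ ((n : ℝ) / 2)^2 := by
    nlinarith [sq_nonneg (2 * (m:ℝ) - (q:ℝ))]
  by_cases hρ1 : ρ ≤ 1
  · have hineq : ρ * (ρ - 1) ≤ 0 := mul_nonpos_of_nonneg_of_nonpos hρ0 (by linarith)
    have hnpos : (0:ℝ) < (n:ℝ) := by exact_mod_cast hn1
    have hsq : 0 < ((n:ℝ)/2)^2 := by positivity
    exact ⟨by linarith, fun h => absurd h (by linarith)⟩
  · push_neg at hρ1
    have hapos : 0 < a := by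
      rcases ha0.lt_or_eq with h | h
      · exact h
      · exfalso
        have hb : b ≤ 0 := by
          by_contra hbp
          push_neg at hbp
          have hpos : 0 < ρ * b := mul_pos (by linarith) hbp
          rw [← h, mul_zero] at hineqB
          linarith
        linarith
    have hbpos : 0 < b := by
      rcases hb0.lt_or_eq with h | h
      · exact h
      · exfalso
        rw [← h, mul_zero, add_zero] at hineqA
        have hap : 0 < a := by linarith
        have := mul_lt_mul_of_pos_right hρ1 hap
        rw [one_mul] at this
        linarith
    have hm1 : 0 < m := by
      by_contra hc
      push_neg at hc
      interval_cases m
      have : X = ∅ := Finset.card_eq_zero.mp (by rw [hXcard])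
      rw [hadef, this, Finset.sum_empty] at hapos
      exact lt_irrefl 0 hapos
    have hρb : 0 < ρ * b := mul_pos (by linarith) hbpos
    have h2mb : 0 < 2 * (m:ℝ) * b := by
      have : (0:ℝ) < (m:ℝ) := by exact_mod_cast hm1
      nlinarith
    have h1 : (ρ - 1) * a ≤ 2 * (m:ℝ) * b := by linarith
    have hkey : ρ * (ρ - 1) ≤ 2 * (m:ℝ) * (q:ℝ) :=
      arith_key h1 hineqB hapos hbpos hρ1 (by positivity)
    refine ⟨by linarith, fun heq => ?_⟩
    -- equality analysis
    have h2mq : 2 * (m:ℝ) * (q:ℝ) = ((n:ℝ)/2)^2 := by linarith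
    have hkeyeq : ρ * (ρ - 1) = 2 * (m:ℝ) * (q:ℝ) := by linarith
    have hsqz : (2 * (m:ℝ) - (q:ℝ))^2 = 0 := by
      have hnn := sq_nonneg (2 * (m:ℝ) - (q:ℝ))
      have hexpand : (2 * (m:ℝ) - (q:ℝ))^2 = (2*(m:ℝ)+(q:ℝ))^2 - 4*(2*(m:ℝ)*(q:ℝ)) := by ring
      rw [hexpand, hnsum, h2mq]
      ring
    have h2meqq : 2 * (m:ℝ) = (q:ℝ) := by
      have := pow_eq_zero_iff (n := 2) (by norm_num) |>.mp hsqz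
      linarith
    have h2meqqN : 2 * m = q := by exact_mod_cast h2meqq
    have hn4m : n = 4 * m := by omega
    have hmpos : (0:ℝ) < 2*(m:ℝ) := by
      have : (0:ℝ) < (m:ℝ) := by exact_mod_cast hm1
      linarith
    obtain ⟨heq2, heq1⟩ := arith_eq h1 hineqB hapos hbpos hρ1 hmpos hkeyeq
    -- a positive coordinate on X
    obtain ⟨x₀, hx₀X, hx₀pos⟩ : ∃ x ∈ X, 0 < y x := by
      by_contra hcon
      push_neg at hcon
      have : a = 0 := by
        rw [hadef]
        exact Finset.sum_eq_zero fun x hx => le_antisymm (hcon x hx) (hynn x)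
      linarith
    -- from eqB : d x = q whenever y x > 0
    have hsum0 : ∑ x ∈ X, (((q:ℝ) - (d x : ℝ)) * y x) = 0 := by
      have hexp : ∑ x ∈ X, (((q:ℝ) - (d x : ℝ)) * y x)
          = (q:ℝ) * a - ρ * b := by
        have hstep : ∑ x ∈ X, (((q:ℝ) - (d x : ℝ)) * y x)
            = ∑ x ∈ X, ((q:ℝ) * y x - (d x : ℝ) * y x) :=
          Finset.sum_congr rfl fun x _ => by ring
        rw [hstep, Finset.sum_sub_distrib, ← Finset.mul_sum, ← hadef, ← hBsum]
      rw [hexp, heq2]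
      ring
    have hterm : ∀ x ∈ X, ((q:ℝ) - (d x : ℝ)) * y x = 0 := by
      refine (Finset.sum_eq_zero_iff_of_nonneg ?_).mp hsum0
      intro x hx
      have : (d x : ℝ) ≤ (q:ℝ) := by exact_mod_cast hdle x
      exact mul_nonneg (by linarith) (hynn x)
    have hdx₀ : d x₀ = q := by
      have := hterm x₀ hx₀X
      rcases mul_eq_zero.mp this with h | h
      · have h' : (d x₀ : ℝ) = (q:ℝ) := by linarith
        exact_mod_cast h' 
      · linarith
    have hWadj : ∀ z ∈ W, G.Adj z x₀ := by
      have hfull : W.filter (fun z => G.Adj z x₀) = W := by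
        apply Finset.eq_of_subset_of_card_le (Finset.filter_subset _ _)
        rw [show (W.filter (fun z => G.Adj z x₀)).card = d x₀ from rfl, hdx₀]
      intro z hz
      have := hfull ▸ hz
      exact (Finset.mem_filter.mp this).2
    -- all W coordinates positive
    have hWpos : ∀ z ∈ W, 0 < y z := by
      intro z hz
      have hx₀nbr : x₀ ∈ G.neighborFinset z := by
        rw [SimpleGraph.mem_neighborFinset]
        exact hWadj z hz
      have hge : y x₀ ≤ ∑ u ∈ G.neighborFinset z, y u :=
        Finset.single_le_sum (fun u _ => hynn u) hx₀nbr
      rw [heig z] at hge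
      by_contra hc
      push_neg at hc
      have : y z = 0 := le_antisymm hc (hynn z)
      rw [this, mul_zero] at hge
      linarith
    -- from eqA : c z = 2m for all z in W
    have hsum0' : ∑ z ∈ W, ((2*(m:ℝ) - (c z : ℝ)) * y z) = 0 := by
      have hexp : ∑ z ∈ W, ((2*(m:ℝ) - (c z : ℝ)) * y z)
          = 2*(m:ℝ) * b - (ρ * a - a) := by
        have hcz : ∑ z ∈ W, (c z : ℝ) * y z = ρ * a - a := by linarith [hTsum]
        have hstep : ∑ z ∈ W, ((2*(m:ℝ) - (c z : ℝ)) * y z)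
            = ∑ z ∈ W, (2*(m:ℝ) * y z - (c z : ℝ) * y z) :=
          Finset.sum_congr rfl fun z _ => by ring
        rw [hstep, Finset.sum_sub_distrib, ← Finset.mul_sum, ← hbdef, hcz]
      rw [hexp]
      linarith [heq1]
    have hterm' : ∀ z ∈ W, (2*(m:ℝ) - (c z : ℝ)) * y z = 0 := by
      refine (Finset.sum_eq_zero_iff_of_nonneg ?_).mp hsum0'
      intro z hz
      have : (c z : ℝ) ≤ 2*(m:ℝ) := by exact_mod_cast hcle z
      exact mul_nonneg (by linarith) (hynn z)
    have hcz : ∀ z ∈ W, c z = 2 * m := by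
      intro z hz
      have h0 := hterm' z hz
      rcases mul_eq_zero.mp h0 with h | h
      · have : (c z : ℝ) = 2*(m:ℝ) := by linarith
        exact_mod_cast this
      · exact absurd h (ne_of_gt (hWpos z hz))
    have hXadj : ∀ z ∈ W, ∀ x ∈ X, G.Adj x z := by
      intro z hz
      have hfull : X.filter (fun x => G.Adj x z) = X := by
        apply Finset.eq_of_subset_of_card_le (Finset.filter_subset _ _)
        rw [show (X.filter (fun x => G.Adj x z)).card = c z from rfl, hcz z hz, hXcard]
      intro x hx
      have := hfull ▸ hx
      exact (Finset.mem_filter.mp this).2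
    refine ⟨hn4m, hM, ?_, ?_⟩
    · have hqpos : 0 < q := by omega
      obtain ⟨z, hz⟩ := Finset.card_pos.mp hqpos
      exact ⟨z, (Finset.mem_filter.mp hz).2⟩
    · intro x z hx hz
      have hxX : x ∈ X := by simp [hXdef, hx]
      have hzW : z ∈ W := by simp [hWdef, hz]
      exact hXadj z hzW x hxX
end Core

section Conv
variable {n m : ℕ} {G : SimpleGraph (Fin n)} [DecidableRel G.Adj] {M : Finset (Sym2 (Fin n))}

lemma eigvec_spec' {A : Matrix (Fin n) (Fin n) ℝ} {ρ : ℝ} {x : Fin n → ℝ}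
    (hx0 : x ≠ 0) (hx : A *ᵥ x = ρ • x) : ρ ∈ spectrum ℝ A := by
  rw [spectrum.mem_iff, Matrix.isUnit_iff_isUnit_det, isUnit_iff_ne_zero, not_not,
    ← Matrix.exists_mulVec_eq_zero_iff]
  refine ⟨x, hx0, ?_⟩
  rw [Matrix.sub_mulVec, hx]
  rw [Matrix.algebraMap_eq_diagonal]
  ext i
  simp [Matrix.mulVec_diagonal]

lemma converse (hM : IsDIM G M) (hcard : M.card = m) (hn4m : n = 4 * m)
    (hc : IsCompleteDIM G M) (hm1 : 1 ≤ m) :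
    ∃ ρ₀ : ℝ, ρ₀ ∈ spectrum ℝ (G.adjMatrix ℝ) ∧ 1 ≤ ρ₀ ∧
      ρ₀ * (ρ₀ - 1) = ((n : ℝ) / 2)^2 := by
  classical
  set X : Finset (Fin n) := univ.filter (fun v => matchedVert M v) with hXdef
  set W : Finset (Fin n) := univ.filter (fun v => ¬ matchedVert M v) with hWdef
  have hXcard : X.card = 2 * m := by rw [hXdef, card_matched hM.1, hcard]
  have hsplit : X.card + W.card = n := by
    rw [hXdef, hWdef, Finset.card_filter_add_card_filter_not]
    exact Fintype.card_fin n
  have hWcard : W.card = 2 * m := by omega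
  set s : ℝ := Real.sqrt (1 + 16 * (m:ℝ)^2) with hsdef
  have hs2 : s^2 = 1 + 16 * (m:ℝ)^2 := Real.sq_sqrt (by positivity)
  have hs0 : 0 ≤ s := Real.sqrt_nonneg _
  have hs1 : 1 ≤ s := by nlinarith
  set ρ₀ : ℝ := (1 + s) / 2 with hρ₀def
  have hρ₀1 : 1 ≤ ρ₀ := by rw [hρ₀def]; linarith
  have hval : ρ₀ * (ρ₀ - 1) = 4 * (m:ℝ)^2 := by
    rw [hρ₀def]
    have : (1 + s) / 2 * ((1 + s) / 2 - 1) = (s^2 - 1) / 4 := by ring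
    rw [this, hs2]
    ring
  set y : Fin n → ℝ := fun v => if matchedVert M v then ρ₀ else 2 * (m:ℝ) with hydef
  have hmpos : (0:ℝ) < (m:ℝ) := by exact_mod_cast hm1
  have hn1 : 0 < n := by omega
  have hy0 : y ≠ 0 := by
    intro h
    have v : Fin n := ⟨0, hn1⟩
    have := congrFun h v
    rw [hydef] at this
    simp only [Pi.zero_apply] at this
    split_ifs at this
    · linarith
    · linarith
  refine ⟨ρ₀, eigvec_spec' hy0 ?_, hρ₀1, ?_⟩
  · ext v
    rw [SimpleGraph.adjMatrix_mulVec_apply, Pi.smul_apply, smul_eq_mul]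
    by_cases hv : matchedVert M v
    · -- matched vertex : neighbors are partner and all of W
      have hmatchednbr := nbr_matched_eq (G := G) hM hv
      have hunnbr : (G.neighborFinset v).filter (fun u => ¬ matchedVert M u) = W := by
        ext z
        simp only [Finset.mem_filter, SimpleGraph.mem_neighborFinset, hWdef,
          Finset.mem_univ, true_and]
        constructor
        · rintro ⟨-, hz⟩; exact hz
        · intro hz; exact ⟨hc.2.2 v z hv hz, hz⟩
      rw [← Finset.sum_filter_add_sum_filter_not (G.neighborFinset v)
        (fun u => matchedVert M u), hmatchednbr, hunnbr, Finset.sum_singleton]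
      have h1 : y (partnerFn M v) = ρ₀ := by
        rw [hydef]; simp [partner_matched hv]
      have h2 : ∑ z ∈ W, y z = 2 * (m:ℝ) * (2 * (m:ℝ)) := by
        have : ∀ z ∈ W, y z = 2 * (m:ℝ) := by
          intro z hz
          simp only [hWdef, Finset.mem_filter, Finset.mem_univ, true_and] at hz
          rw [hydef]; simp [hz]
        rw [Finset.sum_congr rfl this, Finset.sum_const, hWcard]
        push_cast
        ring
      have h3 : y v = ρ₀ := by rw [hydef]; simp [hv]
      rw [h1, h2, h3]
      nlinarith [hval]
    · -- unmatched vertex: neighbors are all of X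
      have hnbr : G.neighborFinset v = X := by
        rw [nbr_unmatched_eq hM hv, ← hXdef]
        apply Finset.filter_true_of_mem
        intro x hx
        simp only [hXdef, Finset.mem_filter, Finset.mem_univ, true_and] at hx
        exact (hc.2.2 x v hx hv).symm
      rw [hnbr]
      have h2 : ∑ x ∈ X, y x = 2 * (m:ℝ) * ρ₀ := by
        have : ∀ x ∈ X, y x = ρ₀ := by
          intro x hx
          simp only [hXdef, Finset.mem_filter, Finset.mem_univ, true_and] at hx
          rw [hydef]; simp [hx]
        rw [Finset.sum_congr rfl this, Finset.sum_const, hXcard]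
        push_cast
        ring
      have h3 : y v = 2 * (m:ℝ) := by rw [hydef]; simp [hv]
      rw [h2, h3]
      ring
  · rw [hval, hn4m]
    push_cast
    ring
end Conv

/-- If `G` has order `n` and a dominating induced matching `M` of size `m`, then
`(n/2)² ≥ ρ(ρ−1)` where `ρ` is the adjacency spectral radius, with equality iff
`n = 4m` and `M` is a complete dominating induced matching of `G`. -/
theorem stmt_10 (n m : ℕ) (G : SimpleGraph (Fin n)) [DecidableRel G.Adj]
    (M : Finset (Sym2 (Fin n))) (hM : IsDIM G M) (hcard : M.card = m)
    (ρ : ℝ) (hρ₁ : ρ ∈ spectrum ℝ (G.adjMatrix ℝ))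
    (hρ₂ : ∀ μ ∈ spectrum ℝ (G.adjMatrix ℝ), μ ≤ ρ) :
    ((n : ℝ) / 2)^2 ≥ ρ * (ρ - 1) ∧
      (((n : ℝ) / 2)^2 = ρ * (ρ - 1) ↔ n = 4 * m ∧ IsCompleteDIM G M) := by
  classical
  have hn1 : 1 ≤ n := by
    by_contra hc
    push_neg at hc
    interval_cases n
    haveI : Subsingleton (Matrix (Fin 0) (Fin 0) ℝ) := ⟨fun a b => by ext i; exact i.elim0⟩
    rw [spectrum.of_subsingleton] at hρ₁
    exact hρ₁
  have hHerm : (G.adjMatrix ℝ).IsHermitian := by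
    ext i j
    simp [Matrix.conjTranspose_apply, SimpleGraph.adjMatrix_apply, SimpleGraph.adj_comm]
  have hpos : ∀ i j, 0 ≤ (G.adjMatrix ℝ) i j := by
    intro i j
    simp only [SimpleGraph.adjMatrix_apply]
    split_ifs <;> norm_num
  obtain ⟨y, hy0, hynn, hAy⟩ := nonneg_eigvec hHerm hpos hρ₁ hρ₂
  obtain ⟨hineq, heqf⟩ := core hM hcard hy0 hynn hAy
  refine ⟨hineq, ?_, ?_⟩
  · intro h
    exact heqf h.symm
  · rintro ⟨hn4m, hc⟩
    have hm1 : 1 ≤ m := by omega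
    obtain ⟨ρ₀, hspec, hρ₀1, hρ₀val⟩ := converse hM hcard hn4m hc hm1
    have hle : ρ₀ ≤ ρ := hρ₂ _ hspec
    have hmono : ρ₀ * (ρ₀ - 1) ≤ ρ * (ρ - 1) := by nlinarith
    linarith [hineq, hρ₀val]
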